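/- Let Ω ⊂ ℝⁿ be a connected open set, and let v : Ω → ℝ ∪ {∞} be a lower semicontinuous function such that for every x₀ ∈ Ω there is a family of measurable sets D_r(x₀) ⊂ Ω (for small r > 0) with B_{cr}(x₀) ⊂ D_r(x₀) ⊂ B_{Cr}(x₀) for fixed constants 0 < c ≤ C, such that r ↦ (1/|D_r(x₀)|)∫_{D_r(x₀)} v dx is nondecreasing as r decreases and converges to v(x₀). Suppose v ≥ m almost everywhere in Ω and v(x₀) = m for some x₀ ∈ Ω. Then v = m almost everywhere in Ω. -/

import Mathlib

open MeasureTheory Metric Set Filter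

/-- Strong maximum principle for functions with the Caffarelli–Blank–Hao sub-mean-value
property: if the averages over the generalized balls D_r(x₀) are nondecreasing as r
decreases and converge to v(x₀), v ≥ m a.e. on the connected open set Ω, and v(x₀) = m at
some point x₀ ∈ Ω, then v = m a.e. on Ω. -/
theorem stmt_7 {n : ℕ} (Ω : Set (EuclideanSpace ℝ (Fin n)))
    (hΩo : IsOpen Ω) (hΩc : IsConnected Ω)
    (v : EuclideanSpace ℝ (Fin n) → ℝ)
    (hlsc : LowerSemicontinuousOn v Ω)
    (hloc : LocallyIntegrableOn v Ω volume)
    (c C : ℝ) (hc : 0 < c) (hcC : c ≤ C)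
    (D : EuclideanSpace ℝ (Fin n) → ℝ → Set (EuclideanSpace ℝ (Fin n)))
    (hD : ∀ x₀ ∈ Ω, ∃ r₀ > (0 : ℝ),
      (∀ r ∈ Set.Ioo (0 : ℝ) r₀,
        MeasurableSet (D x₀ r) ∧ ball x₀ (c * r) ⊆ D x₀ r ∧
          D x₀ r ⊆ ball x₀ (C * r) ∧ D x₀ r ⊆ Ω) ∧
      (∀ r ∈ Set.Ioo (0 : ℝ) r₀, ∀ s ∈ Set.Ioo (0 : ℝ) r₀, r ≤ s →
        (⨍ y in D x₀ s, v y ∂volume) ≤ ⨍ y in D x₀ r, v y ∂volume) ∧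
      Tendsto (fun r => ⨍ y in D x₀ r, v y ∂volume) (nhdsWithin 0 (Set.Ioi 0))
        (nhds (v x₀)))
    (m : ℝ) (hm : ∀ᵐ x ∂volume, x ∈ Ω → m ≤ v x)
    (x₀ : EuclideanSpace ℝ (Fin n)) (hx₀ : x₀ ∈ Ω) (hvx₀ : v x₀ = m) :
    ∀ᵐ x ∂volume, x ∈ Ω → v x = m := by
  have hC : 0 < C := lt_of_lt_of_le hc hcC
  -- Key step: near any point of Ω where v ≤ m, v = m a.e. on a small ball.
  have key : ∀ x ∈ Ω, v x ≤ m → ∃ ε > 0, ball x ε ⊆ Ω ∧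
      (∀ᵐ y ∂volume.restrict (ball x ε), v y = m) := by
    intro x hx hvx
    obtain ⟨r₀, hr₀, hgeo, hmono, htend⟩ := hD x hx
    obtain ⟨ε₁, hε₁, hball⟩ := (Metric.nhds_basis_closedBall.mem_iff).1 (hΩo.mem_nhds hx)
    set r : ℝ := min (r₀ / 2) (ε₁ / C) with hr_def
    have hrpos : 0 < r := lt_min (by linarith) (div_pos hε₁ hC)
    have hrIoo : r ∈ Set.Ioo (0:ℝ) r₀ := ⟨hrpos, lt_of_le_of_lt (min_le_left _ _) (by linarith)⟩
    obtain ⟨hDm, hDb1, hDb2, hDΩ⟩ := hgeo r hrIoo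
    have hCr : C * r ≤ ε₁ := by
      have : r ≤ ε₁ / C := min_le_right _ _
      calc C * r ≤ C * (ε₁ / C) := by nlinarith
        _ = ε₁ := by field_simp
    have hDK : D x r ⊆ closedBall x ε₁ :=
      hDb2.trans ((ball_subset_closedBall).trans (closedBall_subset_closedBall hCr))
    -- integrability on D x r
    have hint : IntegrableOn v (D x r) volume := by
      have h1 : IntegrableOn v (closedBall x ε₁) volume :=
        hloc.integrableOn_compact_subset hball (isCompact_closedBall _ _)
      exact h1.mono_set hDK
    -- D x r has positive finite measure
    have hpos : 0 < volume (D x r) :=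
      lt_of_lt_of_le (measure_ball_pos volume x (by positivity)) (measure_mono hDb1)
    have hfin : volume (D x r) < ⊤ :=
      lt_of_le_of_lt (measure_mono hDb2) measure_ball_lt_top
    have hposR : 0 < (volume (D x r)).toReal := ENNReal.toReal_pos hpos.ne' hfin.ne
    -- average over D x r is ≤ m
    have havg_le : (⨍ y in D x r, v y ∂volume) ≤ m := by
      have h1 : (⨍ y in D x r, v y ∂volume) ≤ v x := by
        refine ge_of_tendsto htend ?_
        filter_upwards [Ioo_mem_nhdsGT_of_mem ⟨le_refl (0:ℝ), hrpos⟩] with s hs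
        exact hmono s ⟨hs.1, hs.2.trans hrIoo.2⟩ r hrIoo hs.2.le
      linarith
    -- average over D x r is ≥ m
    have hm' : ∀ᵐ y ∂volume.restrict (D x r), m ≤ v y := by
      filter_upwards [ae_restrict_of_ae hm, ae_restrict_mem hDm] with y h1 h2
      exact h1 (hDΩ h2)
    have havg_ge : m ≤ ⨍ y in D x r, v y ∂volume := by
      have h2 : (volume (D x r)).toReal * m ≤ ∫ y in D x r, v y ∂volume := by
        have := setIntegral_mono_ae_restrict (integrableOn_const hfin.ne) hint hm'
        rwa [setIntegral_const, smul_eq_mul] at this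
      rw [setAverage_eq, measureReal_def, smul_eq_mul, le_inv_mul_iff₀ hposR]
      linarith [h2]
    -- hence v = m a.e. on D x r
    have hzero : ∫ y in D x r, (v y - m) ∂volume = 0 := by
      have h1 : ∫ y in D x r, v y ∂volume ≤ m * (volume (D x r)).toReal := by
        have := havg_le
        rw [setAverage_eq, measureReal_def, smul_eq_mul, inv_mul_le_iff₀ hposR] at this
        linarith [this]
      have h2 : m * (volume (D x r)).toReal ≤ ∫ y in D x r, v y ∂volume := by
        have := havg_ge
        rw [setAverage_eq, measureReal_def, smul_eq_mul, le_inv_mul_iff₀ hposR] at this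
        linarith [this]
      rw [integral_sub hint (integrableOn_const hfin.ne), setIntegral_const, measureReal_def,
        smul_eq_mul]
      linarith
    have haem : ∀ᵐ y ∂volume.restrict (D x r), v y = m := by
      have hnn : 0 ≤ᵐ[volume.restrict (D x r)] fun y => v y - m := by
        filter_upwards [hm'] with y hy
        simp only [Pi.zero_apply]
        linarith
      have hib : Integrable (fun y => v y - m) (volume.restrict (D x r)) :=
        hint.sub (integrableOn_const hfin.ne)
      have := (integral_eq_zero_iff_of_nonneg_ae hnn hib).1 hzero
      filter_upwards [this] with y hy
      have : v y - m = 0 := hy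
      linarith
    exact ⟨c * r, by positivity, hDb1.trans hDΩ,
      ae_restrict_of_ae_restrict_of_subset hDb1 haem⟩
  -- lsc spreads the a.e. equality to a pointwise bound on the ball
  have key2 : ∀ x ∈ Ω, v x ≤ m → ∃ ε > 0, ball x ε ⊆ Ω ∧ ∀ y ∈ ball x ε, v y ≤ m := by
    intro x hx hvx
    obtain ⟨ε, hε, hbΩ, hae⟩ := key x hx hvx
    refine ⟨ε, hε, hbΩ, fun y hy => ?_⟩
    by_contra hcon
    push_neg at hcon
    have hev := hlsc y (hbΩ hy) m hcon
    obtain ⟨O, hO, hyO, hOsub⟩ := mem_nhdsWithin.1 hev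
    set T := O ∩ ball x ε with hT
    have hTopen : IsOpen T := hO.inter isOpen_ball
    have hTpos : 0 < volume T := hTopen.measure_pos volume ⟨y, hyO, hy⟩
    have haeT : ∀ᵐ z ∂volume.restrict T, v z = m :=
      ae_restrict_of_ae_restrict_of_subset (inter_subset_right) hae
    have hfalse : ∀ᵐ z ∂volume.restrict T, False := by
      filter_upwards [haeT, ae_restrict_mem hTopen.measurableSet] with z h1 h2
      have : m < v z := hOsub ⟨h2.1, hbΩ h2.2⟩
      linarith
    rw [ae_iff] at hfalse
    simp only [not_false_eq_true, setOf_true] at hfalse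
    rw [Measure.restrict_apply_univ] at hfalse
    exact absurd hfalse hTpos.ne'
  -- the set S of points of Ω where v ≤ m is open
  set S := {x | x ∈ Ω ∧ v x ≤ m} with hS
  have hSopen : IsOpen S := by
    rw [Metric.isOpen_iff]
    rintro x ⟨hxΩ, hxv⟩
    obtain ⟨ε, hε, hbΩ, hb⟩ := key2 x hxΩ hxv
    exact ⟨ε, hε, fun y hy => ⟨hbΩ hy, hb y hy⟩⟩
  -- S is relatively closed in Ω
  have hScl : closure S ∩ Ω ⊆ S := by
    rintro x ⟨hxc, hxΩ⟩
    refine ⟨hxΩ, ?_⟩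
    by_contra hcon
    push_neg at hcon
    have hev := hlsc x hxΩ m hcon
    obtain ⟨O, hO, hxO, hOsub⟩ := mem_nhdsWithin.1 hev
    obtain ⟨y, hyO, hyΩ, hyv⟩ := _root_.mem_closure_iff.1 hxc O hO hxO
    exact absurd (hOsub ⟨hyO, hyΩ⟩) (not_lt.2 hyv)
  -- by connectedness, Ω ⊆ S
  have hΩS : Ω ⊆ S := by
    refine hΩc.isPreconnected.subset_of_closure_inter_subset hSopen
      ⟨x₀, hx₀, hx₀, hvx₀.le⟩ hScl
  -- conclusion
  filter_upwards [hm] with x hx hxΩ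
  exact le_antisymm (hΩS hxΩ).2 (hx hxΩ)
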